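/- Let p be an odd prime, k a finite field with #k = p^f, and n > 1 an odd integer dividing p^f − 1. Let a ∈ k^× have multiplicative order exactly n, set V = k², let D := diag(a, a⁻¹) and S := the matrix with rows (0,1),(1,0) in GL_2(k), let C be the cyclic subgroup generated by D and H the subgroup generated by D and S (so H is dihedral of order 2n). Then the following are equivalent: (i) there exists a nonzero 𝔽_p-linear map f : M_2(k) → k² with f(gAg⁻¹) = g f(A) for all g ∈ C; (ii) there exists a nonzero 𝔽_p-linear map f : M_2(k) → k² with f(gAg⁻¹) = g f(A) for all g ∈ H; (iii) there exist ε ∈ {1,−1} and i ∈ ℕ with p^i ≡ 2ε (mod n); (iv) there exist ε ∈ {1,−1} and i ∈ ℕ with p^i ≡ 2ε (mod n) and n divides (2ε)^f − 1. -/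

import Mathlib

open Polynomial

lemma frob_classify {k : Type} [Field k] [Fintype k]
    (p f : ℕ) (hp : p.Prime) [CharP k p] [Algebra (ZMod p) k]
    (hcard : Fintype.card k = p ^ f)
    (σ : k ≃ₐ[ZMod p] k) : ∃ i : ℕ, ∀ x : k, σ x = x ^ p ^ i := by
  haveI : Fact p.Prime := ⟨hp⟩
  -- the Frobenius as an algebra equivalence
  let F : k ≃ₐ[ZMod p] k :=
    { frobeniusEquiv k p with
      commutes' := fun r => by
        show frobenius k p (algebraMap (ZMod p) k r) = algebraMap (ZMod p) k r
        rw [frobenius_def, ← map_pow, ZMod.pow_card] }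
  have hF : ∀ x : k, F x = x ^ p := fun x => rfl
  have hFi : ∀ (j : ℕ) (x : k), (F ^ j) x = x ^ p ^ j := by
    intro j
    induction j with
    | zero => intro x; simp
    | succ j ih =>
      intro x
      rw [pow_succ', AlgEquiv.mul_apply, hF, ih, ← pow_mul, pow_succ']
      ring_nf
  have hle : ∀ j : ℕ, 0 < j → F ^ j = 1 → f ≤ j := by
    intro j hj hFj
    obtain ⟨ξ, hξ⟩ := IsCyclic.exists_generator (α := kˣ)
    have hord : orderOf ξ = p ^ f - 1 := by
      rw [orderOf_eq_card_of_forall_mem_zpowers hξ, Nat.card_units,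
        Nat.card_eq_fintype_card, hcard]
    have : (ξ : k) ^ p ^ j = (ξ : k) := by
      have := congrArg (fun σ : k ≃ₐ[ZMod p] k => σ (ξ : k)) hFj
      simpa [hFi] using this
    have hdvd : p ^ f - 1 ∣ p ^ j - 1 := by
      rw [← hord]
      apply orderOf_dvd_of_pow_eq_one
      have hz : ξ ^ (p ^ j - 1) * ξ = ξ := by
        rw [← pow_succ, Nat.sub_add_cancel (Nat.one_le_pow _ _ hp.pos)]
        apply Units.ext
        push_cast
        exact this
      exact mul_right_cancel (by rw [hz, one_mul])
    have h1 : 1 ≤ p ^ j := Nat.one_le_pow _ _ hp.pos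
    have h2 : p ^ f - 1 ≤ p ^ j - 1 := Nat.le_of_dvd (by
      have : 1 < p ^ j := one_lt_pow₀ hp.one_lt hj.ne'
      omega) hdvd
    have : p ^ f ≤ p ^ j := by
      have hcard1 : 1 < Fintype.card k := Fintype.one_lt_card
      omega
    exact (pow_le_pow_iff_right₀ hp.one_lt).mp this
  haveI : FiniteDimensional (ZMod p) k := Module.Finite.of_finite
  have hcardG : Fintype.card (k ≃ₐ[ZMod p] k) = f := by
    rw [← Nat.card_eq_fintype_card, IsGalois.card_aut_eq_finrank]
    have := Module.card_eq_pow_finrank (K := ZMod p) (V := k)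
    rw [ZMod.card, hcard] at this
    exact (Nat.pow_right_injective hp.two_le this.symm)
  have hFf : F ^ f = 1 := by
    ext x
    show (F ^ f) x = x
    rw [hFi, ← hcard, FiniteField.pow_card]
  have hordF : orderOf F = f := by
    have h1 : orderOf F ∣ f := orderOf_dvd_of_pow_eq_one hFf
    have hpos : 0 < orderOf F := by
      apply orderOf_pos
    have h2 : f ≤ orderOf F := hle _ hpos (pow_orderOf_eq_one F)
    have hf : 0 < f := by
      have hcard1 : 1 < Fintype.card k := Fintype.one_lt_card
      rcases Nat.eq_zero_or_pos f with h | h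
      · rw [h, pow_zero] at hcard; omega
      · exact h
    have h3 : orderOf F ≤ f := Nat.le_of_dvd hf h1
    omega
  have htop : Subgroup.zpowers F = ⊤ := by
    apply Subgroup.eq_top_of_card_eq
    rw [Nat.card_zpowers, hordF, Nat.card_eq_fintype_card, hcardG]
  have : σ ∈ Subgroup.zpowers F := htop ▸ Subgroup.mem_top σ
  rw [← mem_powers_iff_mem_zpowers] at this
  obtain ⟨i, hi⟩ := this
  exact ⟨i, fun x => by rw [← hi, hFi]⟩
lemma twist_conj {k : Type} [Field k] [Fintype k] (p f : ℕ) (hp : p.Prime) [CharP k p]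
    (hcard : Fintype.card k = p ^ f) (b c : k)
    (ψ : k → k) (hadd : ∀ x y, ψ (x + y) = ψ x + ψ y)
    (hcomm : ∀ x, ψ (b * x) = c * ψ x) (hne : ∃ x, ψ x ≠ 0) :
    ∃ i : ℕ, c = b ^ p ^ i := by
  haveI : Fact p.Prime := ⟨hp⟩
  letI : Algebra (ZMod p) k := ZMod.algebra k p
  haveI : FiniteDimensional (ZMod p) k := Module.Finite.of_finite
  let ψ' : k →+ k := AddMonoidHom.mk' ψ hadd
  have hψ0 : ψ 0 = 0 := map_zero ψ'
  have hbn : ∀ (m : ℕ) (x : k), ψ (b ^ m * x) = c ^ m * ψ x := by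
    intro m
    induction m with
    | zero => intro x; simp
    | succ m ih =>
      intro x
      have h1 : b ^ (m + 1) * x = b ^ m * (b * x) := by ring
      rw [h1, ih, hcomm]
      ring
  have hnat : ∀ (m : ℕ) (x : k), ψ ((m : k) * x) = (m : k) * ψ x := by
    intro m x
    rw [← nsmul_eq_mul, ← nsmul_eq_mul]
    exact map_nsmul ψ' m x
  have hpoly : ∀ (q : Polynomial (ZMod p)) (x : k),
      ψ (aeval b q * x) = aeval c q * ψ x := by
    intro q
    induction q using Polynomial.induction_on' with
    | add r s hr hs =>
      intro x
      simp only [map_add, add_mul]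
      rw [hadd, hr, hs]
    | monomial m r =>
      intro x
      obtain ⟨m', rfl⟩ := (ZMod.natCast_rightInverse (n := p)).surjective r
      simp only [aeval_monomial, map_natCast]
      rw [mul_assoc, hnat, hbn, mul_assoc]
  have hintb : IsIntegral (ZMod p) b := Algebra.IsIntegral.isIntegral b
  obtain ⟨x₀, hx₀⟩ := hne
  have hroot : aeval c (minpoly (ZMod p) b) = 0 := by
    have h0 : ψ (aeval b (minpoly (ZMod p) b) * x₀) = aeval c (minpoly (ZMod p) b) * ψ x₀ :=
      hpoly _ _
    rw [minpoly.aeval, zero_mul, hψ0] at h0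
    exact (mul_eq_zero.mp h0.symm).resolve_right hx₀
  obtain ⟨σ, hσ⟩ := minpoly.exists_algEquiv_of_root (K := ZMod p) (L := k) hintb.isAlgebraic hroot
  obtain ⟨i, hi⟩ := frob_classify p f hp hcard σ.symm
  refine ⟨i, ?_⟩
  rw [← hi b, ← hσ, AlgEquiv.symm_apply_apply]


lemma cong_of_unit_eq {G : Type*} [Group G] (a : G) (n : ℕ) (ha : orderOf a = n)
    (s t : ℤ) (h : a ^ s = a ^ t) : s ≡ t [ZMOD n] := by
  have h1 : a ^ (s - t) = 1 := by
    rw [zpow_sub, h, mul_inv_cancel]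
  have hdvd : (n : ℤ) ∣ s - t := by
    rw [← ha]; exact orderOf_dvd_iff_zpow_eq_one.mpr h1
  exact (Int.modEq_iff_dvd.mpr (dvd_sub_comm.mp hdvd)).symm.symm

lemma unit_eq_of_cong {G : Type*} [Group G] (a : G) (n : ℕ) (ha : orderOf a = n)
    (s t : ℤ) (h : s ≡ t [ZMOD n]) : a ^ s = a ^ t := by
  have hdvd : (n : ℤ) ∣ t - s := Int.modEq_iff_dvd.mp h
  have h1 : a ^ (t - s) = 1 := orderOf_dvd_iff_zpow_eq_one.mp (ha ▸ hdvd)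
  rw [zpow_sub] at h1
  have := mul_eq_one_iff_eq_inv.mp h1
  rw [this, inv_inv]

lemma flip1 {p f n : ℕ} (hf : 1 ≤ f) (hpf : (p:ℤ)^f ≡ 1 [ZMOD n]) {ε : ℤ} (hε : ε*ε = 1)
    {i : ℕ} (h : 2 * (p:ℤ)^i ≡ ε [ZMOD n]) : (p:ℤ)^(i*(f-1)) ≡ 2*ε [ZMOD n] := by
  obtain ⟨g, rfl⟩ : ∃ g, f = g + 1 := ⟨f - 1, by omega⟩
  have hg : (g + 1) - 1 = g := by omega
  rw [hg]
  have h1 : (2*(p:ℤ)^i) * (ε * (p:ℤ)^(i*g)) ≡ ε * (ε * (p:ℤ)^(i*g)) [ZMOD n] := h.mul_right _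
  have e1 : ε * (ε * (p:ℤ)^(i*g)) = (p:ℤ)^(i*g) := by rw [← mul_assoc, hε, one_mul]
  have e2 : (2*(p:ℤ)^i) * (ε * (p:ℤ)^(i*g)) = 2*ε*((p:ℤ)^(g+1))^i := by
    rw [← pow_mul]
    have : (g+1)*i = i + i*g := by ring
    rw [this, pow_add]; ring
  rw [e1, e2] at h1
  have h2 : 2*ε*((p:ℤ)^(g+1))^i ≡ 2*ε*1^i [ZMOD n] := (hpf.pow i).mul_left _
  have := (h1.symm.trans h2)
  rwa [one_pow, mul_one] at this

lemma flip2 {p f n : ℕ} (hf : 1 ≤ f) (hpf : (p:ℤ)^f ≡ 1 [ZMOD n]) {ε : ℤ} (hε : ε*ε = 1)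
    {i : ℕ} (h : (p:ℤ)^i ≡ 2*ε [ZMOD n]) : 2 * (p:ℤ)^(i*(f-1)) ≡ ε [ZMOD n] := by
  obtain ⟨g, rfl⟩ : ∃ g, f = g + 1 := ⟨f - 1, by omega⟩
  have hg : (g + 1) - 1 = g := by omega
  rw [hg]
  have h1 : (p:ℤ)^i * (ε * (p:ℤ)^(i*g)) ≡ (2*ε) * (ε * (p:ℤ)^(i*g)) [ZMOD n] := h.mul_right _
  have e1 : (2*ε) * (ε * (p:ℤ)^(i*g)) = 2 * (p:ℤ)^(i*g) := by
    have : (2*ε) * (ε * (p:ℤ)^(i*g)) = 2 * (ε*ε) * (p:ℤ)^(i*g) := by ring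
    rw [this, hε]; ring
  have e2 : (p:ℤ)^i * (ε * (p:ℤ)^(i*g)) = ε*((p:ℤ)^(g+1))^i := by
    rw [← pow_mul]
    have : (g+1)*i = i + i*g := by ring
    rw [this, pow_add]; ring
  rw [e1, e2] at h1
  have h2 : ε*((p:ℤ)^(g+1))^i ≡ ε*1^i [ZMOD n] := (hpf.pow i).mul_left _
  have := (h2.symm.trans h1)
  rw [one_pow, mul_one] at this
  exact this.symm


abbrev M2 (k : Type) [Field k] := Matrix (Fin 2) (Fin 2) k

lemma equiv_closure {k : Type} [Field k] (D S : (M2 k)ˣ)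
    (φ : M2 k → (Fin 2 → k))
    (hD : ∀ A, φ ((D : M2 k) * A * ((D⁻¹ : (M2 k)ˣ) : M2 k)) = (D : M2 k).mulVec (φ A))
    (hS : ∀ A, φ ((S : M2 k) * A * ((S⁻¹ : (M2 k)ˣ) : M2 k)) = (S : M2 k).mulVec (φ A)) :
    ∀ g ∈ Subgroup.closure ({D, S} : Set (M2 k)ˣ), ∀ A,
      φ ((g : M2 k) * A * ((g⁻¹ : (M2 k)ˣ) : M2 k)) = (g : M2 k).mulVec (φ A) := by
  intro g hg
  induction hg using Subgroup.closure_induction with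
  | mem x hx =>
    rcases hx with h | h
    · subst h; exact hD
    · rw [Set.mem_singleton_iff] at h; subst h; exact hS
  | one => intro A; simp
  | mul x y hx hy px py =>
    intro A
    have e : ((x*y : (M2 k)ˣ) : M2 k) * A * (((x*y)⁻¹ : (M2 k)ˣ) : M2 k)
        = (x : M2 k) * ((y : M2 k) * A * ((y⁻¹ : (M2 k)ˣ) : M2 k)) * ((x⁻¹ : (M2 k)ˣ) : M2 k) := by
      rw [mul_inv_rev, Units.val_mul, Units.val_mul]
      simp [mul_assoc]
    rw [e, px, py, Units.val_mul, ← Matrix.mulVec_mulVec]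
  | inv x hx px =>
    intro A
    have h1 := px (((x⁻¹ : (M2 k)ˣ) : M2 k) * A * (x : M2 k))
    have e : (x : M2 k) * (((x⁻¹ : (M2 k)ˣ) : M2 k) * A * (x : M2 k)) * ((x⁻¹ : (M2 k)ˣ) : M2 k)
        = A := by
      have h2 : (x : M2 k) * ((x⁻¹ : (M2 k)ˣ) : M2 k) = 1 := x.mul_inv
      calc (x : M2 k) * (((x⁻¹ : (M2 k)ˣ) : M2 k) * A * (x : M2 k)) * ((x⁻¹ : (M2 k)ˣ) : M2 k)
          = ((x : M2 k) * ((x⁻¹ : (M2 k)ˣ) : M2 k)) * A * ((x : M2 k) * ((x⁻¹ : (M2 k)ˣ) : M2 k)) := by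
            simp [mul_assoc]
        _ = A := by rw [h2, one_mul, mul_one]
    rw [e] at h1
    rw [inv_inv, h1, Matrix.mulVec_mulVec, ← Units.val_mul, inv_mul_cancel]
    simp

section
variable {k : Type} [Field k] (a : kˣ) (D S : (M2 k)ˣ)

lemma Dinv_eq (hD : (D : M2 k) = !![(a : k), 0; 0, ((a⁻¹ : kˣ) : k)]) : ((D⁻¹ : (M2 k)ˣ) : M2 k) = !![((a⁻¹ : kˣ) : k), 0; 0, (a : k)] := by
  have h1 : (D : M2 k) * !![((a⁻¹ : kˣ) : k), 0; 0, (a : k)] = 1 := by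
    rw [hD, Matrix.mul_fin_two]
    norm_num
    norm_num
    rw [Matrix.one_fin_two]
    
  calc ((D⁻¹ : (M2 k)ˣ) : M2 k)
      = ((D⁻¹ : (M2 k)ˣ) : M2 k) * ((D : M2 k) * !![((a⁻¹ : kˣ) : k), 0; 0, (a : k)]) := by
        rw [h1, mul_one]
    _ = (((D⁻¹ * D : (M2 k)ˣ)) : M2 k) * !![((a⁻¹ : kˣ) : k), 0; 0, (a : k)] := by
        rw [Units.val_mul, mul_assoc]
    _ = !![((a⁻¹ : kˣ) : k), 0; 0, (a : k)] := by rw [inv_mul_cancel]; simp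

lemma Sinv_eq (hS : (S : M2 k) = !![0, 1; 1, 0]) : ((S⁻¹ : (M2 k)ˣ) : M2 k) = !![0, 1; 1, 0] := by
  have h1 : (S : M2 k) * !![(0:k), 1; 1, 0] = 1 := by
    rw [hS, Matrix.mul_fin_two]
    rw [Matrix.one_fin_two]
    norm_num
  calc ((S⁻¹ : (M2 k)ˣ) : M2 k)
      = ((S⁻¹ : (M2 k)ˣ) : M2 k) * ((S : M2 k) * !![(0:k), 1; 1, 0]) := by rw [h1, mul_one]
    _ = (((S⁻¹ * S : (M2 k)ˣ)) : M2 k) * !![(0:k), 1; 1, 0] := by rw [Units.val_mul, mul_assoc]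
    _ = !![(0:k), 1; 1, 0] := by rw [inv_mul_cancel]; simp

lemma conjD (hD : (D : M2 k) = !![(a : k), 0; 0, ((a⁻¹ : kˣ) : k)]) (A : M2 k) : (D : M2 k) * A * ((D⁻¹ : (M2 k)ˣ) : M2 k) =
    !![A 0 0, (a:k) * (a:k) * A 0 1; ((a⁻¹:kˣ):k) * ((a⁻¹:kˣ):k) * A 1 0, A 1 1] := by
  rw [hD, Dinv_eq a D hD, Matrix.eta_fin_two A, Matrix.mul_fin_two, Matrix.mul_fin_two]
  have h1 : (a:k) * ((a⁻¹:kˣ):k) = 1 := by rw [← Units.val_mul, mul_inv_cancel, Units.val_one]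
  have h2 : ((a⁻¹:kˣ):k) * (a:k) = 1 := by rw [← Units.val_mul, inv_mul_cancel, Units.val_one]
  ext i j
  fin_cases i <;> fin_cases j <;> simp <;> ring_nf
  all_goals field_simp

lemma conjS (hS : (S : M2 k) = !![0, 1; 1, 0]) (A : M2 k) : (S : M2 k) * A * ((S⁻¹ : (M2 k)ˣ) : M2 k) =
    !![A 1 1, A 1 0; A 0 1, A 0 0] := by
  rw [hS, Sinv_eq S hS, Matrix.eta_fin_two A, Matrix.mul_fin_two, Matrix.mul_fin_two]
  norm_num

lemma mulVecD (hD : (D : M2 k) = !![(a : k), 0; 0, ((a⁻¹ : kˣ) : k)]) (v : Fin 2 → k) :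
    (D : M2 k).mulVec v = ![(a:k) * v 0, ((a⁻¹:kˣ):k) * v 1] := by
  rw [hD]
  funext i
  fin_cases i <;> simp [Matrix.mulVec, dotProduct, Fin.sum_univ_two]

lemma mulVecS (hS : (S : M2 k) = !![0, 1; 1, 0]) (v : Fin 2 → k) : (S : M2 k).mulVec v = ![v 1, v 0] := by
  rw [hS]
  funext i
  fin_cases i <;> simp [Matrix.mulVec, dotProduct, Fin.sum_univ_two]

end

lemma eq_zero_of_self_eq_mul {k : Type} [Field k] {c y : k} (hc : c ≠ 1) (h : y = c * y) :
    y = 0 := by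
  have h1 : (1 - c) * y = 0 := by rw [sub_mul, one_mul, ← h]; ring
  rcases mul_eq_zero.mp h1 with h2 | h2
  · exact absurd (by linear_combination -h2 : c = 1) hc
  · exact h2

/-- **split dihedral case.** Let `p` be an odd prime, `k` a finite field with
`#k = p^f`, `n > 1` an odd divisor of `p^f - 1`, `a ∈ k^×` of order exactly `n`,
`D = diag(a, a⁻¹)` and `S = [[0,1],[1,0]]` in `GL₂(k)`, `C = ⟨D⟩` and `H = ⟨D, S⟩` (dihedral of
order `2n`).  Then the existence of a nonzero `𝔽_p`-linear `C`-equivariant map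
`M₂(k) → k²` (for the conjugation action on the source and the standard action on the target),
the same for `H`, the condition `∃ ε = ±1, ∃ i, p^i ≡ 2ε (mod n)`, and the condition
`∃ ε = ±1, ∃ i, p^i ≡ 2ε (mod n) ∧ n ∣ (2ε)^f - 1` are all equivalent.  (An `𝔽_p`-linear map
between vector spaces over `𝔽_p` is the same as an additive map.) -/
theorem stmt5 {k : Type} [Field k] [Fintype k]
    (p f n : ℕ) (hp : p.Prime) (hp2 : p ≠ 2) [CharP k p]
    (hcard : Fintype.card k = p ^ f)
    (hn1 : 1 < n) (hnodd : Odd n) (hndvd : n ∣ p ^ f - 1)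
    (a : kˣ) (ha : orderOf a = n)
    (D S : (Matrix (Fin 2) (Fin 2) k)ˣ)
    (hD : (D : Matrix (Fin 2) (Fin 2) k) = !![(a : k), 0; 0, ((a⁻¹ : kˣ) : k)])
    (hS : (S : Matrix (Fin 2) (Fin 2) k) = !![0, 1; 1, 0]) :
    [(∃ φ : Matrix (Fin 2) (Fin 2) k → (Fin 2 → k),
        (∃ A, φ A ≠ 0) ∧
        (∀ A B, φ (A + B) = φ A + φ B) ∧
        (∀ g ∈ Subgroup.zpowers D, ∀ A,
          φ ((g : Matrix (Fin 2) (Fin 2) k) * A * ((g⁻¹ : (Matrix (Fin 2) (Fin 2) k)ˣ) :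
              Matrix (Fin 2) (Fin 2) k)) =
            (g : Matrix (Fin 2) (Fin 2) k).mulVec (φ A))),
     (∃ φ : Matrix (Fin 2) (Fin 2) k → (Fin 2 → k),
        (∃ A, φ A ≠ 0) ∧
        (∀ A B, φ (A + B) = φ A + φ B) ∧
        (∀ g ∈ Subgroup.closure ({D, S} : Set (Matrix (Fin 2) (Fin 2) k)ˣ), ∀ A,
          φ ((g : Matrix (Fin 2) (Fin 2) k) * A * ((g⁻¹ : (Matrix (Fin 2) (Fin 2) k)ˣ) :
              Matrix (Fin 2) (Fin 2) k)) =
            (g : Matrix (Fin 2) (Fin 2) k).mulVec (φ A))),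
     (∃ ε : ℤ, (ε = 1 ∨ ε = -1) ∧ ∃ i : ℕ, (p : ℤ) ^ i ≡ 2 * ε [ZMOD n]),
     (∃ ε : ℤ, (ε = 1 ∨ ε = -1) ∧ ∃ i : ℕ,
        (p : ℤ) ^ i ≡ 2 * ε [ZMOD n] ∧ (n : ℤ) ∣ (2 * ε) ^ f - 1)].TFAE := by
  haveI : Fact p.Prime := ⟨hp⟩
  have hf1 : 1 ≤ f := by
    by_contra h
    have hf0 : f = 0 := by omega
    rw [hf0, pow_zero] at hcard
    have := Fintype.one_lt_card (α := k)
    omega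
  have hpf : (p:ℤ)^f ≡ 1 [ZMOD n] := by
    have h1 : (n:ℤ) ∣ ((p^f - 1 : ℕ) : ℤ) := Int.natCast_dvd_natCast.mpr hndvd
    have hple : 1 ≤ p ^ f := Nat.one_le_pow f p hp.pos
    have h2 : ((p^f - 1 : ℕ) : ℤ) = (p:ℤ)^f - 1 := by
      rw [Nat.cast_sub hple]; push_cast; ring
    rw [h2] at h1
    apply Int.ModEq.symm
    rw [Int.modEq_iff_dvd]
    exact h1
  have ha1 : a ≠ 1 := fun h => by rw [h, orderOf_one] at ha; omega
  have hak1 : (a:k) ≠ 1 := fun h => ha1 (Units.ext h)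
  have hainvk1 : ((a⁻¹:kˣ):k) ≠ 1 := fun h => ha1 (inv_eq_one.mp (Units.ext h))
  -- specialized conjugation computations
  have hconjd0 : ∀ x : k, (D : M2 k) * !![x,0;0,0] * ((D⁻¹ : (M2 k)ˣ) : M2 k) = !![x,0;0,0] := by
    intro x
    rw [conjD a D hD]
    norm_num
  have hconjd1 : ∀ x : k, (D : M2 k) * !![0,0;0,x] * ((D⁻¹ : (M2 k)ˣ) : M2 k) = !![0,0;0,x] := by
    intro x
    rw [conjD a D hD]
    norm_num
  have hconj01 : ∀ x : k, (D : M2 k) * !![0,x;0,0] * ((D⁻¹ : (M2 k)ˣ) : M2 k)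
      = !![0, (a:k)*(a:k)*x; 0, 0] := by
    intro x
    rw [conjD a D hD]
    norm_num
  have hconj10 : ∀ x : k, (D : M2 k) * !![0,0;x,0] * ((D⁻¹ : (M2 k)ˣ) : M2 k)
      = !![0, 0; ((a⁻¹:kˣ):k)*((a⁻¹:kˣ):k)*x, 0] := by
    intro x
    rw [conjD a D hD]
    norm_num
  tfae_have 2 → 1
  | ⟨φ, hne, hadd, hequiv⟩ =>
    ⟨φ, hne, hadd, fun g hg => hequiv g
      (Subgroup.zpowers_le.mpr (Subgroup.subset_closure (Set.mem_insert _ _)) hg)⟩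
  tfae_have 3 → 4
  | ⟨ε, hεor, i, hi⟩ => by
    refine ⟨ε, hεor, i, hi, ?_⟩
    have h1 : (2*ε)^f ≡ ((p:ℤ)^i)^f [ZMOD n] := (hi.symm).pow f
    have h2 : ((p:ℤ)^i)^f = ((p:ℤ)^f)^i := by rw [← pow_mul, ← pow_mul, mul_comm]
    have h3 : ((p:ℤ)^f)^i ≡ 1^i [ZMOD n] := hpf.pow i
    rw [one_pow] at h3
    rw [h2] at h1
    have h4 : (1:ℤ) ≡ (2*ε)^f [ZMOD n] := (h1.trans h3).symm
    have := h4.dvd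
    simpa using this
  tfae_have 4 → 3
  | ⟨ε, hεor, i, hi, _⟩ => ⟨ε, hεor, i, hi⟩
  tfae_have 1 → 3
  | ⟨φ, ⟨A₀, hA₀⟩, hadd, hequiv⟩ => by
    have heq : ∀ A, φ ((D : M2 k) * A * ((D⁻¹ : (M2 k)ˣ) : M2 k)) = (D : M2 k).mulVec (φ A) :=
      hequiv D (Subgroup.mem_zpowers D)
    have hφ0 : φ 0 = 0 := by
      have h := hadd 0 0
      rw [add_zero] at h
      exact (add_eq_right.mp h.symm)
    have hvanish : ∀ (A : M2 k), (D : M2 k) * A * ((D⁻¹ : (M2 k)ˣ) : M2 k) = A → φ A = 0 := by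
      intro A hfix
      have h := heq A
      rw [hfix, mulVecD a D hD] at h
      funext j
      fin_cases j
      · have h0 := congrFun h 0
        simp only [Matrix.cons_val_zero] at h0
        simpa using eq_zero_of_self_eq_mul hak1 h0
      · have h1 := congrFun h 1
        simp only [Matrix.cons_val_one, Matrix.head_cons] at h1
        simpa using eq_zero_of_self_eq_mul hainvk1 h1
    have hdiag0 : ∀ x : k, φ !![x,0;0,0] = 0 := fun x => hvanish _ (hconjd0 x)
    have hdiag1 : ∀ x : k, φ !![0,0;0,x] = 0 := fun x => hvanish _ (hconjd1 x)
    have hsum : (A₀ : M2 k) = !![A₀ 0 0,0;0,0] + !![0,A₀ 0 1;0,0]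
        + !![0,0;A₀ 1 0,0] + !![0,0;0,A₀ 1 1] := by
      ext i j
      fin_cases i <;> fin_cases j <;> simp
    have hφsplit : φ A₀ = φ !![0,A₀ 0 1;0,0] + φ !![0,0;A₀ 1 0,0] := by
      conv_lhs => rw [hsum]
      rw [hadd, hadd, hadd, hdiag0, hdiag1, zero_add, add_zero]
    -- additivity of slot maps
    have hadd01 : ∀ x y : k, φ !![0,x+y;0,0] = φ !![0,x;0,0] + φ !![0,y;0,0] := by
      intro x y
      have e : (!![0,x+y;0,0] : M2 k) = !![0,x;0,0] + !![0,y;0,0] := by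
        ext i j; fin_cases i <;> fin_cases j <;> simp
      rw [e, hadd]
    have hadd10 : ∀ x y : k, φ !![0,0;x+y,0] = φ !![0,0;x,0] + φ !![0,0;y,0] := by
      intro x y
      have e : (!![0,0;x+y,0] : M2 k) = !![0,0;x,0] + !![0,0;y,0] := by
        ext i j; fin_cases i <;> fin_cases j <;> simp
      rw [e, hadd]
    -- main case split
    have hcases : (∃ x, φ !![0,x;0,0] 0 ≠ 0) ∨ (∃ x, φ !![0,x;0,0] 1 ≠ 0)
        ∨ (∃ x, φ !![0,0;x,0] 0 ≠ 0) ∨ (∃ x, φ !![0,0;x,0] 1 ≠ 0) := by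
      by_contra hcon
      push_neg at hcon
      obtain ⟨h1, h2, h3, h4⟩ := hcon
      apply hA₀
      rw [hφsplit]
      funext j
      fin_cases j <;> simp [h1, h2, h3, h4]
    -- helper to conclude from each case
    have key : ∀ (b c : kˣ) (ψ : k → k), (∀ x y, ψ (x+y) = ψ x + ψ y) →
        (∀ x, ψ ((b:k) * x) = (c:k) * ψ x) → (∃ x, ψ x ≠ 0) →
        ∃ i : ℕ, c = b ^ p ^ i := by
      intro b c ψ h1 h2 h3
      obtain ⟨i, hi⟩ := twist_conj p f hp hcard (b:k) (c:k) ψ h1 h2 h3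
      exact ⟨i, Units.ext (by rw [Units.val_pow_eq_pow_val]; exact hi)⟩
    have final : ∀ (ε : ℤ), (ε = 1 ∨ ε = -1) → (∀ i:ℕ, ¬ (2 * (p:ℤ)^i ≡ ε [ZMOD n])) → False →
        True := fun _ _ _ _ => trivial
    -- produce the congruence in each of the four cases
    have hgoal : ∃ ε : ℤ, (ε = 1 ∨ ε = -1) ∧ ∃ i : ℕ, 2 * (p:ℤ)^i ≡ ε [ZMOD n] := by
      rcases hcases with ⟨x₁, hx⟩ | ⟨x₁, hx⟩ | ⟨x₁, hx⟩ | ⟨x₁, hx⟩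
      · -- ψ x = φ !![0,x;0,0] 0 : b = a*a, c = a
        obtain ⟨i, hi⟩ := key (a*a) a (fun x => φ !![0,x;0,0] 0)
          (fun x y => by simpa using congrFun (hadd01 x y) 0)
          (fun x => by
            have h := heq !![0,x;0,0]
            rw [hconj01, mulVecD a D hD] at h
            have h0 := congrFun h 0
            simp only [Matrix.cons_val_zero] at h0
            rw [Units.val_mul]
            simpa using h0)
          ⟨x₁, hx⟩
        refine ⟨1, Or.inl rfl, i, ?_⟩
        have e : (a*a) ^ (p^i) = a ^ (((2*p^i : ℕ)) : ℤ) := by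
          rw [zpow_natCast, ← pow_two, ← pow_mul]
        have hz : a ^ (((2*p^i : ℕ)) : ℤ) = a ^ (1 : ℤ) := by
          rw [zpow_one, ← e, ← hi]
        have hcong := cong_of_unit_eq a n ha _ _ hz
        push_cast at hcong
        exact hcong
      · -- ψ x = φ !![0,x;0,0] 1 : b = a*a, c = a⁻¹
        obtain ⟨i, hi⟩ := key (a*a) a⁻¹ (fun x => φ !![0,x;0,0] 1)
          (fun x y => by simpa using congrFun (hadd01 x y) 1)
          (fun x => by
            have h := heq !![0,x;0,0]
            rw [hconj01, mulVecD a D hD] at h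
            have h1 := congrFun h 1
            simp only [Matrix.cons_val_one, Matrix.head_cons] at h1
            rw [Units.val_mul]
            simpa using h1)
          ⟨x₁, hx⟩
        refine ⟨-1, Or.inr rfl, i, ?_⟩
        have e : (a*a) ^ (p^i) = a ^ (((2*p^i : ℕ)) : ℤ) := by
          rw [zpow_natCast, ← pow_two, ← pow_mul]
        have hz : a ^ (((2*p^i : ℕ)) : ℤ) = a ^ (-1 : ℤ) := by
          rw [zpow_neg_one, ← e, ← hi]
        have hcong := (cong_of_unit_eq a n ha _ _ hz)
        push_cast at hcong
        exact hcong
      · -- ψ x = φ !![0,0;x,0] 0 : b = a⁻¹*a⁻¹, c = a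
        obtain ⟨i, hi⟩ := key (a⁻¹*a⁻¹) a (fun x => φ !![0,0;x,0] 0)
          (fun x y => by simpa using congrFun (hadd10 x y) 0)
          (fun x => by
            have h := heq !![0,0;x,0]
            rw [hconj10, mulVecD a D hD] at h
            have h0 := congrFun h 0
            simp only [Matrix.cons_val_zero] at h0
            rw [Units.val_mul]
            simpa using h0)
          ⟨x₁, hx⟩
        refine ⟨-1, Or.inr rfl, i, ?_⟩
        have e : (a⁻¹*a⁻¹) ^ (p^i) = a ^ (-((2*p^i : ℕ) : ℤ)) := by
          rw [zpow_neg, zpow_natCast, ← inv_pow, ← pow_two, ← pow_mul]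
        have hz : a ^ (1 : ℤ) = a ^ (-((2*p^i : ℕ) : ℤ)) := by
          rw [zpow_one, ← e, ← hi]
        have hcong := (cong_of_unit_eq a n ha _ _ hz).symm.neg
        push_cast at hcong
        simpa using hcong
      · -- ψ x = φ !![0,0;x,0] 1 : b = a⁻¹*a⁻¹, c = a⁻¹
        obtain ⟨i, hi⟩ := key (a⁻¹*a⁻¹) a⁻¹ (fun x => φ !![0,0;x,0] 1)
          (fun x y => by simpa using congrFun (hadd10 x y) 1)
          (fun x => by
            have h := heq !![0,0;x,0]
            rw [hconj10, mulVecD a D hD] at h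
            have h1 := congrFun h 1
            simp only [Matrix.cons_val_one, Matrix.head_cons] at h1
            rw [Units.val_mul]
            simpa using h1)
          ⟨x₁, hx⟩
        refine ⟨1, Or.inl rfl, i, ?_⟩
        have e : (a⁻¹*a⁻¹) ^ (p^i) = a ^ (-((2*p^i : ℕ) : ℤ)) := by
          rw [zpow_neg, zpow_natCast, ← inv_pow, ← pow_two, ← pow_mul]
        have hz : a ^ (-1 : ℤ) = a ^ (-((2*p^i : ℕ) : ℤ)) := by
          rw [zpow_neg_one, ← e, ← hi]
        have hcong := (cong_of_unit_eq a n ha _ _ hz).symm.neg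
        push_cast at hcong
        simpa using hcong
    obtain ⟨ε, hεor, i, hi⟩ := hgoal
    have hε2 : ε * ε = 1 := by rcases hεor with h|h <;> rw [h] <;> norm_num
    exact ⟨ε, hεor, i*(f-1), flip1 hf1 hpf hε2 hi⟩
  tfae_have 3 → 2
  | ⟨ε, hεor, i, hi⟩ => by
    have hε2 : ε * ε = 1 := by rcases hεor with h|h <;> rw [h] <;> norm_num
    have hj := flip2 hf1 hpf hε2 hi
    set j := i*(f-1) with hjdef
    have hz : a ^ (((2*p^j : ℕ)) : ℤ) = a ^ ε :=
      unit_eq_of_cong a n ha _ _ (by push_cast; exact hj)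
    rcases hεor with hε | hε
    · subst hε
      have hk1 : (a:k) ^ (2*p^j) = (a:k) := by
        rw [zpow_one, zpow_natCast] at hz
        rw [← Units.val_pow_eq_pow_val, hz]
      have hk2 : ((a⁻¹:kˣ):k) ^ (2*p^j) = ((a⁻¹:kˣ):k) := by
        rw [Units.val_inv_eq_inv_val, inv_pow, hk1]
      refine ⟨fun A => ![(A 0 1)^(p^j), (A 1 0)^(p^j)], ⟨!![0,1;0,0], ?_⟩, ?_, ?_⟩
      · intro hcon
        have h0 := congrFun hcon 0
        simp at h0
      · intro A B
        funext j'
        fin_cases j' <;> simp [add_pow_char_pow]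
      · intro g hg A
        refine equiv_closure D S (fun A => ![(A 0 1)^(p^j), (A 1 0)^(p^j)]) ?_ ?_ g hg A
        · intro B
          rw [conjD a D hD, mulVecD a D hD]
          funext j'
          fin_cases j' <;> simp
          · rw [mul_pow, ← pow_two, ← pow_mul, hk1]
          · rw [mul_pow, ← pow_two, ← pow_mul, inv_pow, hk1]
        · intro B
          rw [conjS S hS, mulVecS S hS]
          funext j'
          fin_cases j' <;> simp
    · subst hε
      have hk1 : (a:k) ^ (2*p^j) = ((a⁻¹:kˣ):k) := by
        rw [zpow_neg_one, zpow_natCast] at hz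
        rw [← Units.val_pow_eq_pow_val, hz]
      have hk2 : ((a⁻¹:kˣ):k) ^ (2*p^j) = (a:k) := by
        rw [Units.val_inv_eq_inv_val, inv_pow, hk1]
        simp
      refine ⟨fun A => ![(A 1 0)^(p^j), (A 0 1)^(p^j)], ⟨!![0,1;0,0], ?_⟩, ?_, ?_⟩
      · intro hcon
        have h0 := congrFun hcon 1
        simp at h0
      · intro A B
        funext j'
        fin_cases j' <;> simp [add_pow_char_pow]
      · intro g hg A
        refine equiv_closure D S (fun A => ![(A 1 0)^(p^j), (A 0 1)^(p^j)]) ?_ ?_ g hg A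
        · intro B
          rw [conjD a D hD, mulVecD a D hD]
          funext j'
          fin_cases j' <;> simp
          · rw [mul_pow, ← pow_two, ← pow_mul, inv_pow, hk1]
            simp
          · rw [mul_pow, ← pow_two, ← pow_mul, hk1]
            simp
        · intro B
          rw [conjS S hS, mulVecS S hS]
          funext j'
          fin_cases j' <;> simp
  tfae_finish
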